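/- Let σ > 0 and let (X₁, X₂) be a random vector in ℝ² on a probability space such that X₁ has the centered Gaussian law N(0,σ²) and X₁ is independent of X₂. Then for every continuously differentiable function f : ℝ² → ℝ which is bounded and has bounded partial derivatives, E[X₁ · f(X₁, X₂)] = σ² · E[∂₁f(X₁, X₂)], where ∂₁f denotes the partial derivative of f in its first variable. -/

import Mathlib

open MeasureTheory ProbabilityTheory

/-- Partial derivative of `f : ℝ × ℝ → ℝ` in its first variable. -/
noncomputable def pderiv1 (f : ℝ × ℝ → ℝ) (p : ℝ × ℝ) : ℝ :=
  deriv (fun y => f (y, p.2)) p.1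

/-- Partial derivative of `f : ℝ × ℝ → ℝ` in its second variable. -/
noncomputable def pderiv2 (f : ℝ × ℝ → ℝ) (p : ℝ × ℝ) : ℝ :=
  deriv (fun y => f (p.1, y)) p.2

open Real Filter


/-- Integral against a nondegenerate Gaussian as a Lebesgue integral against the density. -/
lemma integral_gaussianReal_eq {v : NNReal} (hv : v ≠ 0) (h : ℝ → ℝ) :
    ∫ x, h x ∂(gaussianReal 0 v) = ∫ x, gaussianPDFReal 0 v x * h x := by
  rw [gaussianReal_of_var_ne_zero 0 hv]
  have hm : Measurable fun x => (gaussianPDFReal 0 v x).toNNReal :=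
    (measurable_gaussianPDFReal 0 v).real_toNNReal
  have hden : gaussianPDF 0 v = fun x => ((gaussianPDFReal 0 v x).toNNReal : ENNReal) := rfl
  rw [hden, integral_withDensity_eq_integral_smul hm]
  congr 1
  funext x
  simp [NNReal.smul_def, Real.coe_toNNReal _ (gaussianPDFReal_nonneg 0 v x), mul_comm]


lemma integrable_id_gaussianReal (v : ℝ) (hv : 0 < v) :
    Integrable (fun x : ℝ => x) (gaussianReal 0 v.toNNReal) := by
  have hvt : ((v.toNNReal : ℝ)) = v := Real.coe_toNNReal _ hv.le
  have hvt0 : v.toNNReal ≠ 0 := by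
    simp [Real.toNNReal_eq_zero]; linarith
  set c : ℝ := (Real.sqrt (2 * π * v))⁻¹ with hc_def
  set b : ℝ := (2 * v)⁻¹ with hb_def
  have hb : 0 < b := by positivity
  have hc : 0 < c := by
    have : 0 < Real.sqrt (2 * π * v) := Real.sqrt_pos.mpr (by positivity)
    positivity
  have hφeq : ∀ x : ℝ, gaussianPDFReal 0 v.toNNReal x = c * Real.exp (-b * x ^ 2) := by
    intro x
    unfold gaussianPDFReal
    rw [hvt]
    have harg : -(x - 0) ^ 2 / (2 * v) = -b * x ^ 2 := by
      rw [hb_def]; field_simp; ring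
    rw [harg]
  rw [gaussianReal_of_var_ne_zero 0 hvt0,
    integrable_withDensity_iff (measurable_gaussianPDF 0 v.toNNReal)
      (ae_of_all _ fun x => ENNReal.ofReal_lt_top)]
  have hres : ∀ x : ℝ, (gaussianPDF 0 v.toNNReal x).toReal = c * Real.exp (-b * x ^ 2) := by
    intro x
    rw [gaussianPDF, ENNReal.toReal_ofReal (gaussianPDFReal_nonneg 0 _ x), hφeq]
  refine Integrable.mono' (((integrable_mul_exp_neg_mul_sq hb).abs).const_mul c)
    ?_ ?_
  · exact (continuous_id.mul (by continuity :
      Continuous fun x : ℝ => (gaussianPDF 0 v.toNNReal x).toReal)).aestronglyMeasurable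
  · filter_upwards with x
    rw [Real.norm_eq_abs, hres x, abs_mul, abs_mul]
    have hE : (0:ℝ) < Real.exp (-b * x ^ 2) := Real.exp_pos _
    rw [abs_of_pos hc, abs_of_pos hE]
    rw [abs_mul, abs_of_pos hE]
    ring_nf
    exact le_of_eq (by ring)


lemma stein_1d (v : ℝ) (hv : 0 < v) (g : ℝ → ℝ) (hg : ContDiff ℝ 1 g)
    (C : ℝ) (hC : ∀ x, |g x| ≤ C) (C' : ℝ) (hC' : ∀ x, |deriv g x| ≤ C') :
    ∫ x, x * g x ∂(gaussianReal 0 v.toNNReal)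
      = v * ∫ x, deriv g x ∂(gaussianReal 0 v.toNNReal) := by
  have hvt : ((v.toNNReal : ℝ)) = v := Real.coe_toNNReal _ hv.le
  have hvt0 : v.toNNReal ≠ 0 := by
    simp [Real.toNNReal_eq_zero]; linarith
  set c : ℝ := (Real.sqrt (2 * π * v))⁻¹ with hc_def
  set b : ℝ := (2 * v)⁻¹ with hb_def
  have hb : 0 < b := by positivity
  have hc : 0 < c := by
    have : 0 < Real.sqrt (2 * π * v) := Real.sqrt_pos.mpr (by positivity)
    positivity
  set φ : ℝ → ℝ := fun x => c * Real.exp (-b * x ^ 2) with hφ_def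
  have hφeq : gaussianPDFReal 0 v.toNNReal = φ := by
    funext x
    unfold gaussianPDFReal
    rw [hvt]
    have harg : -(x - 0) ^ 2 / (2 * v) = -b * x ^ 2 := by
      rw [hb_def]; field_simp; ring
    rw [harg]
  have hφcont : Continuous φ := by
    continuity
  have hgc : Continuous g := hg.continuous
  have hg'c : Continuous (deriv g) := hg.continuous_deriv le_rfl
  have hC0 : 0 ≤ C := le_trans (abs_nonneg _) (hC 0)
  have hC'0 : 0 ≤ C' := le_trans (abs_nonneg _) (hC' 0)
  -- integrability
  have hA : Integrable (fun x => x * g x * φ x) := by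
    refine Integrable.mono' (((integrable_mul_exp_neg_mul_sq hb).abs).const_mul (C * c))
      ((continuous_id.mul hgc).mul hφcont).aestronglyMeasurable ?_
    filter_upwards with x
    have hE : (0:ℝ) < Real.exp (-b * x ^ 2) := Real.exp_pos _
    have h1 : |x| * |g x| ≤ |x| * C := mul_le_mul_of_nonneg_left (hC x) (abs_nonneg x)
    calc ‖x * g x * φ x‖ = |x| * |g x| * (c * Real.exp (-b * x ^ 2)) := by
          rw [Real.norm_eq_abs, abs_mul, abs_mul, abs_of_pos (by positivity : (0:ℝ) < φ x)]
      _ ≤ |x| * C * (c * Real.exp (-b * x ^ 2)) :=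
          mul_le_mul_of_nonneg_right h1 (by positivity)
      _ = C * c * |x * Real.exp (-b * x ^ 2)| := by
          rw [abs_mul, abs_of_pos hE]; ring
  have hB : Integrable (fun x => v * (deriv g x * φ x)) := by
    refine Integrable.mono' ((integrable_exp_neg_mul_sq hb).const_mul (v * C' * c))
      (continuous_const.mul (hg'c.mul hφcont)).aestronglyMeasurable ?_
    filter_upwards with x
    have hE : (0:ℝ) < Real.exp (-b * x ^ 2) := Real.exp_pos _
    calc ‖v * (deriv g x * φ x)‖ = v * (|deriv g x| * (c * Real.exp (-b * x ^ 2))) := by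
          rw [Real.norm_eq_abs, abs_mul, abs_mul, abs_of_pos hv,
            abs_of_pos (by positivity : (0:ℝ) < φ x)]
      _ ≤ v * (C' * (c * Real.exp (-b * x ^ 2))) := by
          have := mul_le_mul_of_nonneg_right (hC' x)
            (by positivity : (0:ℝ) ≤ c * Real.exp (-b * x ^ 2))
          exact mul_le_mul_of_nonneg_left this hv.le
      _ = v * C' * c * Real.exp (-b * x ^ 2) := by ring
  -- derivative of G
  set G : ℝ → ℝ := fun x => -v * (g x * φ x) with hG_def
  have hG : ∀ x, HasDerivAt G (x * g x * φ x - v * (deriv g x * φ x)) x := by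
    intro x
    have hφx : HasDerivAt φ (c * (Real.exp (-b * x ^ 2) * (-b * (2 * x)))) x := by
      have h1 : HasDerivAt (fun x : ℝ => -b * x ^ 2) (-b * (2 * x)) x := by
        simpa using (hasDerivAt_pow 2 x).const_mul (-b)
      exact (h1.exp).const_mul c
    have hgx : HasDerivAt g (deriv g x) x := (hg.differentiable one_ne_zero x).hasDerivAt
    have := ((hgx.mul hφx).const_mul (-v))
    convert this using 1
    case e'_4 => rfl
    case e'_5 => rfl
    case e'_8 => rfl
    have hvb : v * b * 2 = 1 := by rw [hb_def]; field_simp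
    simp only [hφ_def]
    linear_combination (-(x * g x * c * Real.exp (-b * x ^ 2))) * hvb
  -- tendsto of exp factor
  have hsqTop : Tendsto (fun x : ℝ => x ^ 2) atTop atTop := tendsto_pow_atTop two_ne_zero
  have hsqBot : Tendsto (fun x : ℝ => x ^ 2) atBot atTop := by
    have := hsqTop.comp tendsto_neg_atBot_atTop
    simpa [Function.comp_def, neg_sq] using this
  have hexp : ∀ l : Filter ℝ, Tendsto (fun x : ℝ => x ^ 2) l atTop →
      Tendsto (fun x => Real.exp (-b * x ^ 2)) l (nhds 0) := by
    intro l hl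
    have h1 : Tendsto (fun x : ℝ => -b * x ^ 2) l atBot := by
      have h2 := Tendsto.const_mul_atTop hb hl
      have h3 := tendsto_neg_atTop_atBot.comp h2
      simpa [Function.comp_def, neg_mul] using h3
    exact Real.tendsto_exp_atBot.comp h1
  -- tendsto of G
  have hGten : ∀ l : Filter ℝ, Tendsto (fun x : ℝ => x ^ 2) l atTop →
      Tendsto G l (nhds 0) := by
    intro l hl
    refine squeeze_zero_norm (a := fun x => v * C * c * Real.exp (-b * x ^ 2)) (fun x => ?_) ?_
    · have hE : (0:ℝ) < Real.exp (-b * x ^ 2) := Real.exp_pos _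
      calc ‖G x‖ = v * (|g x| * (c * Real.exp (-b * x ^ 2))) := by
            rw [Real.norm_eq_abs, hG_def]
            simp only []
            rw [abs_mul, abs_mul, abs_neg, abs_of_pos hv,
              abs_of_pos (by positivity : (0:ℝ) < c * Real.exp (-b * x ^ 2))]
        _ ≤ v * (C * (c * Real.exp (-b * x ^ 2))) := by
            have := mul_le_mul_of_nonneg_right (hC x)
              (by positivity : (0:ℝ) ≤ c * Real.exp (-b * x ^ 2))
            exact mul_le_mul_of_nonneg_left this hv.le
        _ = v * C * c * Real.exp (-b * x ^ 2) := by ring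
    · have := (hexp l hl).const_mul (v * C * c)
      simpa using this
  -- FTC on the whole line
  have hFTC : ∫ x, (x * g x * φ x - v * (deriv g x * φ x)) = 0 := by
    have := integral_of_hasDerivAt_of_tendsto hG (hA.sub hB)
      (hGten atBot hsqBot) (hGten atTop hsqTop)
    simpa using this
  have hkey : ∫ x, x * g x * φ x = v * ∫ x, deriv g x * φ x := by
    rw [integral_sub hA hB] at hFTC
    have h2 : ∫ x, v * (deriv g x * φ x) = v * ∫ x, deriv g x * φ x :=
      integral_const_mul v _
    linarith [hFTC, h2]
  -- convert back to gaussian integrals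
  rw [integral_gaussianReal_eq hvt0, integral_gaussianReal_eq hvt0, hφeq]
  have e1 : (fun x => φ x * (x * g x)) = fun x => x * g x * φ x :=
    funext fun x => by ring
  have e2 : (fun x => deriv g x * φ x) = fun x => φ x * deriv g x :=
    funext fun x => mul_comm _ _
  rw [e1, hkey, e2]

/-- **Two-dimensional Stein lemma, forward direction.**
If `X₁ ~ N(0, σ²)` and `X₁` is independent of `X₂`, then for every continuously
differentiable `f : ℝ² → ℝ` which is bounded with bounded partial derivatives,
`E[X₁ f(X₁, X₂)] = σ² E[∂₁ f(X₁, X₂)]`. -/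
theorem stein_lemma_2d_forward
    {Ω : Type*} [MeasurableSpace Ω] (P : Measure Ω) [IsProbabilityMeasure P]
    (σ : ℝ) (hσ : 0 < σ) (X₁ X₂ : Ω → ℝ) (hX₁ : Measurable X₁) (hX₂ : Measurable X₂)
    (hlaw : Measure.map X₁ P = gaussianReal 0 (Real.toNNReal (σ ^ 2)))
    (hindep : IndepFun X₁ X₂ P)
    (f : ℝ × ℝ → ℝ) (hf : ContDiff ℝ 1 f)
    (hfb : ∃ C, ∀ p, |f p| ≤ C)
    (hfb1 : ∃ C, ∀ p, |pderiv1 f p| ≤ C)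
    (hfb2 : ∃ C, ∀ p, |pderiv2 f p| ≤ C) :
    ∫ ω, X₁ ω * f (X₁ ω, X₂ ω) ∂P = σ ^ 2 * ∫ ω, pderiv1 f (X₁ ω, X₂ ω) ∂P := by
  obtain ⟨C, hC⟩ := hfb
  obtain ⟨C1, hC1⟩ := hfb1
  have hv : (0:ℝ) < σ ^ 2 := by positivity
  have hC0 : 0 ≤ C := le_trans (abs_nonneg _) (hC 0)
  have hC10 : 0 ≤ C1 := le_trans (abs_nonneg _) (hC1 0)
  set μ₁ : Measure ℝ := Measure.map X₁ P with hμ₁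
  set μ₂ : Measure ℝ := Measure.map X₂ P with hμ₂
  haveI : IsProbabilityMeasure μ₂ := Measure.isProbabilityMeasure_map hX₂.aemeasurable
  haveI : IsProbabilityMeasure μ₁ := by rw [hlaw]; infer_instance
  have hjoint : Measure.map (fun ω => (X₁ ω, X₂ ω)) P = μ₁.prod μ₂ :=
    (indepFun_iff_map_prod_eq_prod_map_map hX₁.aemeasurable hX₂.aemeasurable).mp hindep
  -- continuity of the partial derivative
  have hp1 : pderiv1 f = fun p => fderiv ℝ f p (1, 0) := by
    funext p
    have hfd : HasFDerivAt f (fderiv ℝ f p) p := (hf.differentiable one_ne_zero p).hasFDerivAt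
    have hline : HasDerivAt (fun y : ℝ => (y, p.2)) ((1:ℝ), (0:ℝ)) p.1 :=
      (hasDerivAt_id p.1).prodMk (hasDerivAt_const p.1 p.2)
    exact (hfd.comp_hasDerivAt p.1 hline).deriv
  have hp1cont : Continuous (pderiv1 f) := by
    rw [hp1]
    exact (hf.continuous_fderiv one_ne_zero).clm_apply continuous_const
  -- change of variables to the joint law
  have hL : ∫ ω, X₁ ω * f (X₁ ω, X₂ ω) ∂P = ∫ p : ℝ × ℝ, p.1 * f p ∂(μ₁.prod μ₂) := by
    rw [← hjoint]
    exact (integral_map (hX₁.prodMk hX₂).aemeasurable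
      ((continuous_fst.mul hf.continuous).aestronglyMeasurable)).symm
  have hR : ∫ ω, pderiv1 f (X₁ ω, X₂ ω) ∂P = ∫ p : ℝ × ℝ, pderiv1 f p ∂(μ₁.prod μ₂) := by
    rw [← hjoint]
    exact (integral_map (hX₁.prodMk hX₂).aemeasurable
      hp1cont.aestronglyMeasurable).symm
  -- integrability on the product
  have hid : Integrable (fun x : ℝ => x) μ₁ := by
    rw [hlaw]; exact integrable_id_gaussianReal _ hv
  have hfst : Integrable (fun p : ℝ × ℝ => p.1) (μ₁.prod μ₂) := by
    have h1 : Integrable (fun x : ℝ => x) (Measure.map Prod.fst (μ₁.prod μ₂)) := by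
      rw [Measure.map_fst_prod, measure_univ, one_smul]; exact hid
    exact (integrable_map_measure aestronglyMeasurable_id
      measurable_fst.aemeasurable).mp h1
  have hI1 : Integrable (fun p : ℝ × ℝ => p.1 * f p) (μ₁.prod μ₂) := by
    refine Integrable.mono' (hfst.abs.const_mul C)
      ((continuous_fst.mul hf.continuous).aestronglyMeasurable) ?_
    filter_upwards with p
    rw [Real.norm_eq_abs, abs_mul]
    calc |p.1| * |f p| ≤ |p.1| * C := mul_le_mul_of_nonneg_left (hC p) (abs_nonneg _)
      _ = C * |p.1| := mul_comm _ _
  have hI2 : Integrable (pderiv1 f) (μ₁.prod μ₂) := by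
    refine Integrable.mono' (integrable_const C1) hp1cont.aestronglyMeasurable ?_
    filter_upwards with p
    rw [Real.norm_eq_abs]; exact hC1 p
  -- Fubini and the one-dimensional Stein lemma
  have key : ∀ y : ℝ, ∫ x, x * f (x, y) ∂μ₁ = σ ^ 2 * ∫ x, pderiv1 f (x, y) ∂μ₁ := by
    intro y
    rw [hlaw]
    exact stein_1d (σ ^ 2) hv (fun x => f (x, y))
      (hf.comp (contDiff_id.prodMk contDiff_const)) C (fun x => hC (x, y))
      C1 (fun x => hC1 (x, y))
  rw [hL, hR, integral_prod_symm _ hI1, integral_prod_symm _ hI2, ← integral_const_mul]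
  exact integral_congr_ae (ae_of_all _ fun y => key y)
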